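/- Each of the following subgroups of the symmetric group on {1,…,14} has a normal subgroup whose order is a power of 2 with cyclic quotient: (i) ⟨(1,8)(2,13)(3,10)(4,12)(5,11)(6,9), (1,8)(2,12)(4,13)(5,9)(6,11)(7,14)⟩; (ii) ⟨(2,11)(3,7)(4,9)(5,12)(6,13)(10,14), (2,4)(3,10)(5,6)(7,14)(9,11)(12,13)⟩; (iii) ⟨(1,14)(2,9)(4,6)(5,12)(7,8)(11,13), (1,8)(2,10)(3,9)(4,7)(6,13)(11,14)⟩; (iv) ⟨(1,11,3)(2,6,14)(4,10,8)(7,9,13), (1,3)(2,9)(4,5)(6,13)(8,10)(11,12)⟩. -/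

import Mathlib

set_option maxRecDepth 100000
set_option maxHeartbeats 1000000

/-- `G₆⁴ = ⟨(1,8)(2,13)(3,10)(4,12)(5,11)(6,9), (1,8)(2,12)(4,13)(5,9)(6,11)(7,14)⟩`. -/
def G₆₄ : Subgroup (Equiv.Perm (Fin 14)) :=
  Subgroup.closure {c[1,8] * c[2,13] * c[3,10] * c[4,12] * c[5,11] * c[6,9],
    c[1,8] * c[2,12] * c[4,13] * c[5,9] * c[6,11] * c[7,14]}

/-- `G₆⁵ = ⟨(2,11)(3,7)(4,9)(5,12)(6,13)(10,14), (2,4)(3,10)(5,6)(7,14)(9,11)(12,13)⟩`. -/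
def G₆₅ : Subgroup (Equiv.Perm (Fin 14)) :=
  Subgroup.closure {c[2,11] * c[3,7] * c[4,9] * c[5,12] * c[6,13] * c[10,14],
    c[2,4] * c[3,10] * c[5,6] * c[7,14] * c[9,11] * c[12,13]}

/-- `G₆⁸ = ⟨(1,14)(2,9)(4,6)(5,12)(7,8)(11,13), (1,8)(2,10)(3,9)(4,7)(6,13)(11,14)⟩`. -/
def G₆₈ : Subgroup (Equiv.Perm (Fin 14)) :=
  Subgroup.closure {c[1,14] * c[2,9] * c[4,6] * c[5,12] * c[7,8] * c[11,13],
    c[1,8] * c[2,10] * c[3,9] * c[4,7] * c[6,13] * c[11,14]}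

/-- `G₆⁹ = ⟨(1,11,3)(2,6,14)(4,10,8)(7,9,13), (1,3)(2,9)(4,5)(6,13)(8,10)(11,12)⟩`. -/
def G₆₉ : Subgroup (Equiv.Perm (Fin 14)) :=
  Subgroup.closure {c[1,11,3] * c[2,6,14] * c[4,10,8] * c[7,9,13],
    c[1,3] * c[2,9] * c[4,5] * c[6,13] * c[8,10] * c[11,12]}

/-- `G` has a normal subgroup of `2`-power order with cyclic quotient (type `Ψ₂`). -/
def IsPsiTwo (G : Subgroup (Equiv.Perm (Fin 14))) : Prop :=
  ∃ P : Subgroup G, ∃ hP : P.Normal, (∃ m : ℕ, Nat.card P = 2 ^ m) ∧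
    (letI := hP; IsCyclic (G ⧸ P))

open Equiv Subgroup

/-! ### Auxiliary machinery -/

lemma card_of_coe (H : Subgroup (Perm (Fin 14))) (s : Finset (Perm (Fin 14)))
    (h : (H : Set (Perm (Fin 14))) = ↑s) : Nat.card H = s.card := by
  have : Nat.card H = Nat.card ((↑s : Set (Perm (Fin 14))) : Type) := by rw [← h]; rfl
  rw [this]; exact Nat.card_eq_finsetCard s

/-- A `2`-group is trivially of type `Ψ₂` (take `P = ⊤`). -/
lemma psiTwo_of_card_pow (G : Subgroup (Perm (Fin 14))) (m : ℕ)
    (h : Nat.card G = 2 ^ m) : IsPsiTwo G := by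
  refine ⟨⊤, inferInstance, ⟨m, ?_⟩, ?_⟩
  · rwa [Nat.card_congr Subgroup.topEquiv.toEquiv]
  · letI := QuotientGroup.subsingleton_quotient_top (G := G)
    exact isCyclic_of_subsingleton

/-! ### `G₆⁴` -/

def a64 : Perm (Fin 14) := c[1,8] * c[2,13] * c[3,10] * c[4,12] * c[5,11] * c[6,9]
def b64 : Perm (Fin 14) := c[1,8] * c[2,12] * c[4,13] * c[5,9] * c[6,11] * c[7,14]
def s64 : Finset (Perm (Fin 14)) := {1, a64, b64, a64 * b64}

def H64 : Subgroup (Perm (Fin 14)) where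
  carrier := ↑s64
  one_mem' := by decide
  mul_mem' := by
    intro x y hx hy
    simp only [s64, Finset.coe_insert, Set.mem_insert_iff, Finset.coe_singleton,
      Set.mem_singleton_iff] at *
    rcases hx with h|h|h|h <;> rcases hy with h'|h'|h'|h' <;> subst h <;> subst h' <;> decide
  inv_mem' := by
    intro x hx
    simp only [s64, Finset.coe_insert, Set.mem_insert_iff, Finset.coe_singleton,
      Set.mem_singleton_iff] at *
    rcases hx with h|h|h|h <;> subst h <;> decide

lemma G64_eq : G₆₄ = H64 := by
  apply le_antisymm
  · refine (closure_le H64).mpr ?_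
    intro x hx
    rcases hx with h | h <;> subst h <;> exact (Finset.mem_coe (s := s64)).mpr (by decide)
  · have ha : a64 ∈ G₆₄ := subset_closure (Or.inl rfl)
    have hb : b64 ∈ G₆₄ := subset_closure (Or.inr rfl)
    intro x hx
    have hx' : x ∈ s64 := hx
    simp only [s64, Finset.mem_insert, Finset.mem_singleton] at hx'
    rcases hx' with h|h|h|h <;> subst h
    · exact one_mem _
    · exact ha
    · exact hb
    · exact mul_mem ha hb

/-! ### `G₆⁵` -/

def a65 : Perm (Fin 14) := c[2,11] * c[3,7] * c[4,9] * c[5,12] * c[6,13] * c[10,14]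
def b65 : Perm (Fin 14) := c[2,4] * c[3,10] * c[5,6] * c[7,14] * c[9,11] * c[12,13]
def s65 : Finset (Perm (Fin 14)) := {1, a65, b65, a65 * b65}

def H65 : Subgroup (Perm (Fin 14)) where
  carrier := ↑s65
  one_mem' := by decide
  mul_mem' := by
    intro x y hx hy
    simp only [s65, Finset.coe_insert, Set.mem_insert_iff, Finset.coe_singleton,
      Set.mem_singleton_iff] at *
    rcases hx with h|h|h|h <;> rcases hy with h'|h'|h'|h' <;> subst h <;> subst h' <;> decide
  inv_mem' := by
    intro x hx
    simp only [s65, Finset.coe_insert, Set.mem_insert_iff, Finset.coe_singleton,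
      Set.mem_singleton_iff] at *
    rcases hx with h|h|h|h <;> subst h <;> decide

lemma G65_eq : G₆₅ = H65 := by
  apply le_antisymm
  · refine (closure_le H65).mpr ?_
    intro x hx
    rcases hx with h | h <;> subst h <;> exact (Finset.mem_coe (s := s65)).mpr (by decide)
  · have ha : a65 ∈ G₆₅ := subset_closure (Or.inl rfl)
    have hb : b65 ∈ G₆₅ := subset_closure (Or.inr rfl)
    intro x hx
    have hx' : x ∈ s65 := hx
    simp only [s65, Finset.mem_insert, Finset.mem_singleton] at hx'
    rcases hx' with h|h|h|h <;> subst h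
    · exact one_mem _
    · exact ha
    · exact hb
    · exact mul_mem ha hb

/-! ### `G₆⁸` -/

def a68 : Perm (Fin 14) := c[1,14] * c[2,9] * c[4,6] * c[5,12] * c[7,8] * c[11,13]
def b68 : Perm (Fin 14) := c[1,8] * c[2,10] * c[3,9] * c[4,7] * c[6,13] * c[11,14]
def s68 : Finset (Perm (Fin 14)) :=
  {1, a68, b68, a68 * b68, b68 * a68, a68 * b68 * a68, b68 * a68 * b68, a68 * b68 * a68 * b68}

def H68 : Subgroup (Perm (Fin 14)) where
  carrier := ↑s68
  one_mem' := by decide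
  mul_mem' := by
    intro x y hx hy
    simp only [s68, Finset.coe_insert, Set.mem_insert_iff, Finset.coe_singleton,
      Set.mem_singleton_iff] at *
    rcases hx with h|h|h|h|h|h|h|h <;> rcases hy with h'|h'|h'|h'|h'|h'|h'|h' <;> subst h <;> subst h' <;> decide
  inv_mem' := by
    intro x hx
    simp only [s68, Finset.coe_insert, Set.mem_insert_iff, Finset.coe_singleton,
      Set.mem_singleton_iff] at *
    rcases hx with h|h|h|h|h|h|h|h <;> subst h <;> decide

lemma G68_eq : G₆₈ = H68 := by
  apply le_antisymm
  · refine (closure_le H68).mpr ?_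
    intro x hx
    rcases hx with h | h <;> subst h <;> exact (Finset.mem_coe (s := s68)).mpr (by decide)
  · have ha : a68 ∈ G₆₈ := subset_closure (Or.inl rfl)
    have hb : b68 ∈ G₆₈ := subset_closure (Or.inr rfl)
    intro x hx
    have hx' : x ∈ s68 := hx
    simp only [s68, Finset.mem_insert, Finset.mem_singleton] at hx'
    rcases hx' with h|h|h|h|h|h|h|h <;> subst h
    · exact one_mem _
    · exact ha
    · exact hb
    · exact mul_mem ha hb
    · exact mul_mem hb ha
    · exact mul_mem (mul_mem ha hb) ha
    · exact mul_mem (mul_mem hb ha) hb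
    · exact mul_mem (mul_mem (mul_mem ha hb) ha) hb

/-! ### `G₆⁹` -/

def a69 : Perm (Fin 14) := c[1,11,3] * c[2,6,14] * c[4,10,8] * c[7,9,13]
def b69 : Perm (Fin 14) := c[1,3] * c[2,9] * c[4,5] * c[6,13] * c[8,10] * c[11,12]
def s69 : Finset (Perm (Fin 14)) :=
  {1, a69, b69, a69 * a69, a69 * b69, b69 * a69, a69 * a69 * b69, a69 * b69 * a69,
    b69 * a69 * a69, b69 * a69 * b69, a69 * a69 * b69 * a69, a69 * b69 * a69 * a69}
def v69 : Finset (Perm (Fin 14)) := {1, b69, a69 * b69 * a69 * a69, a69 * a69 * b69 * a69}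

def H69 : Subgroup (Perm (Fin 14)) where
  carrier := ↑s69
  one_mem' := by decide
  mul_mem' := by
    intro x y hx hy
    simp only [s69, Finset.coe_insert, Set.mem_insert_iff, Finset.coe_singleton,
      Set.mem_singleton_iff] at *
    rcases hx with h|h|h|h|h|h|h|h|h|h|h|h <;> rcases hy with h'|h'|h'|h'|h'|h'|h'|h'|h'|h'|h'|h' <;> subst h <;> subst h' <;> decide
  inv_mem' := by
    intro x hx
    simp only [s69, Finset.coe_insert, Set.mem_insert_iff, Finset.coe_singleton,
      Set.mem_singleton_iff] at *
    rcases hx with h|h|h|h|h|h|h|h|h|h|h|h <;> subst h <;> decide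

/-- The Klein four-subgroup of `G₆⁹ ≅ A₄`. -/
def V69 : Subgroup (Perm (Fin 14)) where
  carrier := ↑v69
  one_mem' := by decide
  mul_mem' := by
    intro x y hx hy
    simp only [v69, Finset.coe_insert, Set.mem_insert_iff, Finset.coe_singleton,
      Set.mem_singleton_iff] at *
    rcases hx with h|h|h|h <;> rcases hy with h'|h'|h'|h' <;> subst h <;> subst h' <;> decide
  inv_mem' := by
    intro x hx
    simp only [v69, Finset.coe_insert, Set.mem_insert_iff, Finset.coe_singleton,
      Set.mem_singleton_iff] at *
    rcases hx with h|h|h|h <;> subst h <;> decide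

lemma V69_le_H69 : V69 ≤ H69 := by
  intro x hx
  have hx' : x ∈ v69 := hx
  simp only [v69, Finset.mem_insert, Finset.mem_singleton] at hx'
  have : x ∈ s69 := by rcases hx' with h|h|h|h <;> subst h <;> decide
  exact this

lemma G69_eq : G₆₉ = H69 := by
  apply le_antisymm
  · refine (closure_le H69).mpr ?_
    intro x hx
    rcases hx with h | h <;> subst h <;> exact (Finset.mem_coe (s := s69)).mpr (by decide)
  · have ha : a69 ∈ G₆₉ := subset_closure (Or.inl rfl)
    have hb : b69 ∈ G₆₉ := subset_closure (Or.inr rfl)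
    intro x hx
    have hx' : x ∈ s69 := hx
    simp only [s69, Finset.mem_insert, Finset.mem_singleton] at hx'
    rcases hx' with h|h|h|h|h|h|h|h|h|h|h|h <;> subst h
    · exact one_mem _
    · exact ha
    · exact hb
    · exact mul_mem ha ha
    · exact mul_mem ha hb
    · exact mul_mem hb ha
    · exact mul_mem (mul_mem ha ha) hb
    · exact mul_mem (mul_mem ha hb) ha
    · exact mul_mem (mul_mem hb ha) ha
    · exact mul_mem (mul_mem hb ha) hb
    · exact mul_mem (mul_mem (mul_mem ha ha) hb) ha
    · exact mul_mem (mul_mem (mul_mem ha hb) ha) ha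

lemma V69_subgroupOf_normal : (V69.subgroupOf H69).Normal := by
  constructor
  intro n hn g
  rw [Subgroup.mem_subgroupOf] at hn ⊢
  have hg : (g : Perm (Fin 14)) ∈ s69 := g.2
  have hn' : (n : Perm (Fin 14)) ∈ v69 := hn
  have key : ∀ x ∈ s69, ∀ v ∈ v69, x * v * x⁻¹ ∈ v69 := by
    intro x hx v hv
    simp only [s69, v69, Finset.mem_insert, Finset.mem_singleton] at hx hv
    rcases hx with h|h|h|h|h|h|h|h|h|h|h|h <;> rcases hv with h'|h'|h'|h' <;> subst h <;>
      subst h' <;> decide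
  exact key _ hg _ hn'

lemma psiTwo_H69 : IsPsiTwo H69 := by
  refine ⟨V69.subgroupOf H69, V69_subgroupOf_normal, ⟨2, ?_⟩, ?_⟩
  · rw [Nat.card_congr (subgroupOfEquivOfLe V69_le_H69).toEquiv]
    rw [card_of_coe V69 v69 rfl]; decide
  · letI := V69_subgroupOf_normal
    haveI : Fact (Nat.Prime 3) := ⟨by norm_num⟩
    apply isCyclic_of_prime_card (p := 3)
    have h1 := Subgroup.card_eq_card_quotient_mul_card_subgroup (V69.subgroupOf H69)
    have h2 : Nat.card H69 = 12 := by rw [card_of_coe H69 s69 rfl]; decide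
    have h3 : Nat.card (V69.subgroupOf H69) = 4 := by
      rw [Nat.card_congr (subgroupOfEquivOfLe V69_le_H69).toEquiv]
      rw [card_of_coe V69 v69 rfl]; decide
    rw [h2, h3] at h1
    omega

/-- Each of the subgroups `G₆⁴`, `G₆⁵`, `G₆⁸`, `G₆⁹` has a normal subgroup
of `2`-power order with cyclic quotient. -/
theorem subgroups_of_G₆_are_Psi₂ :
    IsPsiTwo G₆₄ ∧ IsPsiTwo G₆₅ ∧ IsPsiTwo G₆₈ ∧ IsPsiTwo G₆₉ := by
  refine ⟨?_, ?_, ?_, ?_⟩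
  · exact psiTwo_of_card_pow G₆₄ 2 (by rw [G64_eq, card_of_coe H64 s64 rfl]; decide)
  · exact psiTwo_of_card_pow G₆₅ 2 (by rw [G65_eq, card_of_coe H65 s65 rfl]; decide)
  · exact psiTwo_of_card_pow G₆₈ 3 (by rw [G68_eq, card_of_coe H68 s68 rfl]; decide)
  · rw [G69_eq]; exact psiTwo_H69
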